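/- Let 𝒜 be an abelian category with enough projectives, 𝒞 a resolving subcategory, P an upper-bounded complex of projective objects and C an upper-bounded complex with terms in 𝒞. Then the localization functor induces an isomorphism Hom_{K^-(𝒞)}(P, C) ≅ Hom_{K^-(𝒞)/K^b_{ac}(𝒞)}(P, C), where K^b_{ac}(𝒞) is the subcategory of complexes homotopy equivalent to bounded acyclic complexes over 𝒞. -/

import Mathlib

open CategoryTheory CategoryTheory.Limits

universe v u v₂ u₂

variable {𝒜 : Type u} [Category.{v} 𝒜] [Abelian 𝒜]

/-- A cochain complex belongs to `K^b_{ac}(𝒞)` if it is homotopy equivalent to a bounded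
acyclic cochain complex with all terms in `𝒞`. -/
def KbAc (𝒞 : 𝒜 → Prop) (X : CochainComplex 𝒜 ℤ) : Prop :=
  ∃ D : CochainComplex 𝒜 ℤ,
    (∃ a b : ℤ, ∀ n : ℤ, (n < a ∨ b < n) → IsZero (D.X n)) ∧
    (∀ n : ℤ, D.ExactAt n) ∧
    (∀ n : ℤ, 𝒞 (D.X n)) ∧
    Nonempty (HomotopyEquiv X D)

/-- The homotopy category `K^-(𝒞)` of upper-bounded cochain complexes with terms in `𝒞`,
as a full subcategory of `K(𝒜)`. -/
abbrev KMinus (𝒞 : 𝒜 → Prop) :=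
  ObjectProperty.FullSubcategory (fun X : HomotopyCategory 𝒜 (ComplexShape.up ℤ) =>
    (∃ b : ℤ, ∀ n : ℤ, b < n → IsZero (X.as.X n)) ∧ (∀ n : ℤ, 𝒞 (X.as.X n)))

/-- The class of morphisms of `K^-(𝒞)` whose mapping cone lies in `K^b_{ac}(𝒞)`; the Verdier
quotient `K^-(𝒞)/K^b_{ac}(𝒞)` is the localization of `K^-(𝒞)` at this class. -/
def WQuot (𝒞 : 𝒜 → Prop) : MorphismProperty (KMinus 𝒞) := fun X Y φ =>
  ∃ f : X.obj.as ⟶ Y.obj.as,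
    (HomotopyCategory.quotient 𝒜 (ComplexShape.up ℤ)).map f = φ.hom ∧
    KbAc 𝒞 (CochainComplex.mappingCone f)

/-- The equation asserting that `s` is a null-homotopy of `f` at degree `n`. -/
def HtpEq {P D : CochainComplex 𝒜 ℤ} (f : P ⟶ D)
    (s : ∀ n : ℤ, P.X n ⟶ D.X (n - 1)) (n : ℤ) : Prop :=
  f.f n = P.d n (n + 1) ≫ s (n + 1) ≫ (D.XIsoOfEq (show n + 1 - 1 = n by omega)).hom
    + s n ≫ D.d (n - 1) n

lemma htp_step {P D : CochainComplex 𝒜 ℤ} (f : P ⟶ D)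
    (hPproj : ∀ n : ℤ, Projective (P.X n)) (hD : ∀ n : ℤ, D.ExactAt n)
    (n₀ : ℤ) (s : ∀ n : ℤ, P.X n ⟶ D.X (n - 1)) (hs : ∀ n : ℤ, n₀ < n → HtpEq f s n) :
    ∃ σ : P.X n₀ ⟶ D.X (n₀ - 1),
      (HtpEq f (Function.update s n₀ σ) n₀ ∧
        ∀ n : ℤ, n₀ < n → HtpEq f (Function.update s n₀ σ) n) := by
  obtain ⟨g, hg⟩ : ∃ g : P.X n₀ ⟶ D.X n₀, g =
    f.f n₀ - P.d n₀ (n₀ + 1) ≫ s (n₀ + 1) ≫ (D.XIsoOfEq (show n₀ + 1 - 1 = n₀ by omega)).hom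
    := ⟨_, rfl⟩
  have hg0 : g ≫ D.d n₀ (n₀ + 1) = 0 := by
    have h1 : f.f n₀ ≫ D.d n₀ (n₀ + 1) = P.d n₀ (n₀ + 1) ≫ f.f (n₀ + 1) := f.comm _ _
    have h2 := hs (n₀ + 1) (by omega)
    rw [HtpEq] at h2
    rw [hg, Preadditive.sub_comp, h1, h2]
    simp only [Preadditive.comp_add, Category.assoc, HomologicalComplex.d_comp_d_assoc,
      zero_comp, comp_zero, zero_add, HomologicalComplex.XIsoOfEq_hom_comp_d]
    abel
  have hex : (D.sc' (n₀ - 1) n₀ (n₀ + 1)).Exact :=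
    (D.exactAt_iff' (n₀ - 1) n₀ (n₀ + 1)
      ((ComplexShape.up ℤ).prev_eq' (by simp))
      ((ComplexShape.up ℤ).next_eq' (by simp))).1 (hD n₀)
  haveI := hPproj n₀
  refine ⟨hex.liftFromProjective g hg0, ?_, ?_⟩
  · rw [HtpEq, Function.update_of_ne (show n₀ + 1 ≠ n₀ by omega) (hex.liftFromProjective g hg0) s, Function.update_self n₀ (hex.liftFromProjective g hg0) s]
    have := hex.liftFromProjective_comp g hg0
    change hex.liftFromProjective g hg0 ≫ D.d (n₀ - 1) n₀ = g at this
    refine Eq.trans ?_ (congrArg (fun t => P.d n₀ (n₀ + 1) ≫ s (n₀ + 1) ≫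
      (D.XIsoOfEq (show n₀ + 1 - 1 = n₀ by omega)).hom + t) this.symm)
    rw [hg]
    abel
  · intro n hn
    have h := hs n hn
    rw [HtpEq] at h ⊢
    rw [Function.update_of_ne (show n + 1 ≠ n₀ by omega) (hex.liftFromProjective g hg0) s, Function.update_of_ne (show n ≠ n₀ by omega) (hex.liftFromProjective g hg0) s]
    exact h

/-- The sequence of successive approximations of a null-homotopy. -/
noncomputable def htpAux {P D : CochainComplex 𝒜 ℤ} (f : P ⟶ D) (bP : ℤ)
    (hPb : ∀ n : ℤ, bP < n → IsZero (P.X n)) (hPproj : ∀ n : ℤ, Projective (P.X n))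
    (hD : ∀ n : ℤ, D.ExactAt n) :
    (k : ℕ) → {s : ∀ n : ℤ, P.X n ⟶ D.X (n - 1) // ∀ n : ℤ, bP - k < n → HtpEq f s n}
  | 0 => ⟨fun _ => 0, by
      intro n hn
      rw [HtpEq]
      simp only [zero_comp, comp_zero, add_zero, Limits.comp_zero, Limits.zero_comp]
      exact (hPb n (by omega)).eq_of_src _ _⟩
  | (k + 1) => by
      obtain ⟨s, hs⟩ := htpAux f bP hPb hPproj hD k
      have key := htp_step f hPproj hD (bP - k) s (fun n hn => hs n hn)
      exact ⟨Function.update s (bP - k) key.choose, by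
        intro n hn
        rcases eq_or_lt_of_le (show bP - k ≤ n by push_cast at hn ⊢; omega) with h | h
        · exact h ▸ key.choose_spec.1
        · exact key.choose_spec.2 n h⟩

lemma htpAux_stab {P D : CochainComplex 𝒜 ℤ} (f : P ⟶ D) (bP : ℤ)
    (hPb : ∀ n : ℤ, bP < n → IsZero (P.X n)) (hPproj : ∀ n : ℤ, Projective (P.X n))
    (hD : ∀ n : ℤ, D.ExactAt n) (k m : ℕ) (n : ℤ) (hn : bP - k < n) :
    (htpAux f bP hPb hPproj hD (k + m)).1 n = (htpAux f bP hPb hPproj hD k).1 n := by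
  induction m with
  | zero => rfl
  | succ m ih =>
      rw [show k + (m + 1) = (k + m) + 1 by omega]
      rw [htpAux]
      dsimp
      rw [Function.update_of_ne (by push_cast; omega)]
      exact ih

lemma nonempty_homotopy_zero {P D : CochainComplex 𝒜 ℤ} (f : P ⟶ D) (bP : ℤ)
    (hPb : ∀ n : ℤ, bP < n → IsZero (P.X n)) (hPproj : ∀ n : ℤ, Projective (P.X n))
    (hD : ∀ n : ℤ, D.ExactAt n) : Nonempty (Homotopy f (0 : P ⟶ D)) := by
  set T := htpAux f bP hPb hPproj hD with hT
  set s : ∀ n : ℤ, P.X n ⟶ D.X (n - 1) := fun n => (T (bP + 1 - n).toNat).1 n with hsdef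
  have hs : ∀ n : ℤ, HtpEq f s n := by
    intro n
    have h1 : bP - ((bP + 1 - n).toNat : ℤ) < n := by omega
    have h2 := (T (bP + 1 - n).toNat).2 n h1
    have hkk : (bP + 1 - (n+1)).toNat + ((bP + 1 - n).toNat - (bP + 1 - (n+1)).toNat)
        = (bP + 1 - n).toNat := by omega
    have h3 : s (n + 1) = (T (bP + 1 - n).toNat).1 (n + 1) := by
      rw [hsdef]
      dsimp only
      rw [← hkk]
      exact (htpAux_stab f bP hPb hPproj hD _ _ (n + 1) (by omega)).symm
    rw [HtpEq] at h2 ⊢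
    rw [h3]
    exact h2
  refine ⟨⟨fun i j => (dite (j + 1 = i)
      (fun h => s i ≫ (D.XIsoOfEq (show i - 1 = j by omega)).hom) (fun _ => 0)),
      fun i j h => dif_neg h, fun i => ?_⟩⟩
  have hrel1 : (ComplexShape.up ℤ).Rel i (i + 1) := by simp
  have hrel2 : (ComplexShape.up ℤ).Rel (i - 1) i := by simp
  rw [dNext_eq _ hrel1, prevD_eq _ hrel2]
  rw [dif_pos (by omega), dif_pos (by omega)]
  have h := hs i
  rw [HtpEq] at h
  simp only [HomologicalComplex.zero_f_apply, add_zero]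
  rw [h]
  simp [HomologicalComplex.XIsoOfEq]

/-- Every map in the homotopy category from a bounded-above complex of projectives
to an acyclic complex is zero. -/
lemma hom_to_acyclic_eq_zero {P' Dc : CochainComplex 𝒜 ℤ} (bP : ℤ)
    (hPb : ∀ n : ℤ, bP < n → IsZero (P'.X n)) (hPproj : ∀ n : ℤ, Projective (P'.X n))
    (hD : ∀ n : ℤ, Dc.ExactAt n)
    (g : (HomotopyCategory.quotient 𝒜 (ComplexShape.up ℤ)).obj P' ⟶
      (HomotopyCategory.quotient 𝒜 (ComplexShape.up ℤ)).obj Dc) : g = 0 := by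
  obtain ⟨g₀, rfl⟩ := (HomotopyCategory.quotient 𝒜 (ComplexShape.up ℤ)).map_surjective g
  obtain ⟨h⟩ := nonempty_homotopy_zero g₀ bP hPb hPproj hD
  rw [HomotopyCategory.eq_of_homotopy _ _ h, Functor.map_zero]

lemma key_bij (𝒞 : 𝒜 → Prop) (P : KMinus 𝒞) (hP : ∀ n : ℤ, Projective (P.obj.as.X n))
    {X Y : KMinus 𝒞} (s : X ⟶ Y) (hs : WQuot 𝒞 s) :
    Function.Bijective (fun g : (P ⟶ X) => g ≫ s) := by
  obtain ⟨bP, hbP⟩ := P.property.1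
  obtain ⟨f₀, hf₀, Dc, hDbdd, hDex, -, ⟨e⟩⟩ := hs
  set Q := HomotopyCategory.quotient 𝒜 (ComplexShape.up ℤ) with hQ
  have hT := HomotopyCategory.mappingCone_triangleh_distinguished f₀
  set T := CochainComplex.mappingCone.triangleh f₀ with hTdef
  -- vanishing of maps from bounded-above projective complexes into `T.obj₃`
  have vanishP : ∀ (W : CochainComplex 𝒜 ℤ) (bW : ℤ), (∀ m : ℤ, bW < m → IsZero (W.X m)) →
      (∀ m : ℤ, Projective (W.X m)) → ∀ (u : Q.obj W ⟶ T.obj₃), u = 0 := by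
    intro W bW hbW hWproj u
    have e' : T.obj₃ ≅ Q.obj Dc := HomotopyCategory.isoOfHomotopyEquiv e
    have h0 : u ≫ e'.hom = 0 := hom_to_acyclic_eq_zero bW hbW hWproj hDex (u ≫ e'.hom)
    calc u = (u ≫ e'.hom) ≫ e'.inv := by simp
    _ = 0 := by rw [h0, zero_comp]
  constructor
  · -- injectivity
    intro g₁ g₂ hgg
    have hsub : ((g₁ - g₂).hom : P.obj ⟶ X.obj) ≫ s.hom = 0 := by
      show (g₁.hom - g₂.hom) ≫ s.hom = 0
      rw [Preadditive.sub_comp, sub_eq_zero]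
      exact congrArg (fun x => x.hom) hgg
    have : ((g₁ - g₂).hom : P.obj ⟶ X.obj) = 0 := by
      set g : P.obj ⟶ X.obj := (g₁ - g₂).hom with hg
      set F1 := CategoryTheory.shiftFunctor (HomotopyCategory 𝒜 (ComplexShape.up ℤ)) (1 : ℤ)
        with hF1
      have hzero : F1.map g ≫ (CategoryTheory.shiftFunctor _ (1 : ℤ)).map T.mor₁ = 0 := by
        refine (Functor.map_comp _ _ _).symm.trans ?_
        have : (g ≫ T.mor₁ : P.obj ⟶ T.obj₂) = 0 := by
          have : T.mor₁ = s.hom := hf₀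
          exact (congrArg (fun t => g ≫ t) this).trans hsub
        exact (congrArg F1.map this).trans (Functor.map_zero _ _ _)
      obtain ⟨w, hw⟩ := Pretriangulated.Triangle.coyoneda_exact₁ T hT (F1.map g) hzero
      have eS : Q.obj ((CategoryTheory.shiftFunctor (CochainComplex 𝒜 ℤ) (1 : ℤ)).obj P.obj.as)
          ≅ F1.obj P.obj := (Q.commShiftIso (1 : ℤ)).app P.obj.as
      have hw0 : w = 0 := by
        have h1 : eS.hom ≫ w = 0 := by
          refine vanishP ((CategoryTheory.shiftFunctor (CochainComplex 𝒜 ℤ) (1 : ℤ)).obj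
            P.obj.as) (bP - 1) ?_ ?_ (eS.hom ≫ w)
          · intro m hm
            exact hbP (m + 1) (by omega)
          · intro m
            exact hP (m + 1)
        calc w = eS.inv ≫ (eS.hom ≫ w) := by simp
        _ = 0 := by rw [h1, comp_zero]
      have : F1.map g = 0 := hw.trans (by rw [hw0]; exact zero_comp)
      exact F1.map_injective (this.trans (F1.map_zero _ _).symm)
    rw [← sub_eq_zero]
    exact ObjectProperty.hom_ext _ this
  · -- surjectivity
    intro g
    have h0 : (g.hom ≫ T.mor₂ : P.obj ⟶ T.obj₃) = 0 := vanishP P.obj.as bP hbP hP (g.hom ≫ T.mor₂)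
    obtain ⟨g', hg'⟩ := Pretriangulated.Triangle.coyoneda_exact₂ T hT g.hom h0
    refine ⟨ObjectProperty.homMk g', ?_⟩
    ext1
    show (g' ≫ s.hom : P.obj ⟶ Y.obj) = g.hom
    rw [hg']
    congr 1
    exact hf₀.symm

/-- Let `𝒜` be an abelian category with enough projectives, `𝒞` a resolving
subcategory, `P` an upper-bounded complex of projectives and `C` an upper-bounded complex
with terms in `𝒞`, both regarded as objects of `K^-(𝒞)`.  Then the localization functor
(realizing the Verdier quotient `K^-(𝒞)/K^b_{ac}(𝒞)`) induces a bijection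
`Hom_{K^-(𝒞)}(P, C) ≅ Hom_{K^-(𝒞)/K^b_{ac}(𝒞)}(P, C)`, `f ↦ f/Id_P`. -/
theorem stmt_18 [EnoughProjectives 𝒜] (𝒞 : 𝒜 → Prop)
    (h𝒞iso : ∀ X Y : 𝒜, (X ≅ Y) → 𝒞 X → 𝒞 Y)
    (h𝒞proj : ∀ X : 𝒜, Projective X → 𝒞 X)
    (h𝒞ext : ∀ S : ShortComplex 𝒜, S.ShortExact → 𝒞 S.X₁ → 𝒞 S.X₃ → 𝒞 S.X₂)
    (h𝒞summand : ∀ X Y : 𝒜, 𝒞 (X ⊞ Y) → 𝒞 X)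
    (h𝒞ker : ∀ S : ShortComplex 𝒜, S.ShortExact → 𝒞 S.X₂ → 𝒞 S.X₃ → 𝒞 S.X₁)
    (D : Type u₂) [Category.{v₂} D] (L : KMinus 𝒞 ⥤ D) [L.IsLocalization (WQuot 𝒞)]
    (P C : KMinus 𝒞) (hP : ∀ n : ℤ, Projective (P.obj.as.X n)) :
    Function.Bijective (fun f : P ⟶ C => L.map f) := by

  have key : ∀ {X Y : KMinus 𝒞} (s : X ⟶ Y), WQuot 𝒞 s →
      Function.Bijective (fun g : (P ⟶ X) => g ≫ s) := fun s hs => key_bij 𝒞 P hP s hs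
  let F' : KMinus 𝒞 ⥤ Type (max v v₂) :=
    coyoneda.obj (Opposite.op P) ⋙ uliftFunctor.{max v v₂, v}
  have hF' : (WQuot 𝒞).IsInvertedBy F' := by
    intro X Y s hs
    rw [isIso_iff_bijective]
    have hmap : F'.map s = TypeCat.ofHom (fun (a : ULift.{max v v₂} (P ⟶ X)) =>
        (⟨a.down ≫ s⟩ : ULift.{max v v₂} (P ⟶ Y))) := rfl
    rw [hmap]
    constructor
    · intro a b hab
      have := (key s hs).1 (congrArg ULift.down hab)
      exact congrArg ULift.up this
    · intro y
      obtain ⟨y⟩ := y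
      obtain ⟨g, hg⟩ := (key s hs).2 y
      exact ⟨⟨g⟩, congrArg ULift.up hg⟩
  let G : D ⥤ Type (max v v₂) := Localization.lift F' hF' L
  let e : L ⋙ G ≅ F' := Localization.fac F' hF' L
  let u : G.obj (L.obj P) := e.inv.app P ⟨𝟙 P⟩
  let r : ∀ (C' : KMinus 𝒞), (L.obj P ⟶ L.obj C') → (P ⟶ C') :=
    fun C' φ => (e.hom.app C' (G.map φ u)).down
  have heP : e.hom.app P u = ⟨𝟙 P⟩ := by
    show e.hom.app P (e.inv.app P ⟨𝟙 P⟩) = ⟨𝟙 P⟩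
    exact types_congr_hom (e.inv_hom_id_app P) (⟨𝟙 P⟩ : F'.obj P)
  have hrnat : ∀ {C₁ C₂ : KMinus 𝒞} (φ : L.obj P ⟶ L.obj C₁) (h : C₁ ⟶ C₂),
      r C₂ (φ ≫ L.map h) = r C₁ φ ≫ h := by
    intro C₁ C₂ φ h
    have hnat := types_congr_hom (e.hom.naturality h) (G.map φ u)
    simp only [Functor.comp_map, types_comp_apply] at hnat
    show (e.hom.app C₂ (G.map (φ ≫ L.map h) u)).down = (e.hom.app C₁ (G.map φ u)).down ≫ h
    rw [FunctorToTypes.map_comp_apply, hnat]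
    rfl
  have hrP : r P (𝟙 (L.obj P)) = 𝟙 P := by
    show (e.hom.app P (G.map (𝟙 (L.obj P)) u)).down = 𝟙 P
    rw [FunctorToTypes.map_id_apply, heP]
  have hrL : ∀ (C' : KMinus 𝒞) (f : P ⟶ C'), r C' (L.map f) = f := by
    intro C' f
    have h := hrnat (𝟙 (L.obj P)) f
    rw [Category.id_comp (L.map f)] at h
    rw [h, hrP, Category.id_comp]
  constructor
  · intro f g h
    rw [← hrL C f, ← hrL C g]
    exact congrArg (r C) h
  · intro φ
    refine ⟨r C φ, ?_⟩
    let coyo : D ⥤ Type (max v v₂) :=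
      coyoneda.obj (Opposite.op (L.obj P)) ⋙ uliftFunctor.{max v v₂, v₂}
    letI : Localization.Lifting L (WQuot 𝒞) (L ⋙ coyo) coyo := ⟨Iso.refl _⟩
    let θ : L ⋙ coyo ⟶ L ⋙ coyo :=
      { app := fun C' => TypeCat.ofHom (fun x => ⟨L.map (r C' x.down)⟩)
        naturality := by
          intro C₁ C₂ h
          ext x
          show (⟨L.map (r C₂ (x.down ≫ L.map h))⟩ : ULift (L.obj P ⟶ L.obj C₂))
            = ⟨L.map (r C₁ x.down) ≫ L.map h⟩
          rw [hrnat x.down h, L.map_comp] }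
    let ν := Localization.liftNatTrans L (WQuot 𝒞) (L ⋙ coyo) (L ⋙ coyo) coyo coyo θ
    have hν : ∀ (C' : KMinus 𝒞) (x : (L ⋙ coyo).obj C'), ν.app (L.obj C') x = θ.app C' x := by
      intro C' x
      have h := types_congr_hom
        (Localization.liftNatTrans_app L (WQuot 𝒞) (L ⋙ coyo) (L ⋙ coyo) coyo coyo θ C') x
      have hiso : Localization.Lifting.iso L (WQuot 𝒞) (L ⋙ coyo) coyo
          = Iso.refl (L ⋙ coyo) := rfl
      rw [hiso] at h
      exact h
    have hid : ν.app (L.obj P) ⟨𝟙 (L.obj P)⟩ = ⟨𝟙 (L.obj P)⟩ := by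
      rw [hν P ⟨𝟙 (L.obj P)⟩]
      show (⟨L.map (r P (𝟙 (L.obj P)))⟩ : ULift (L.obj P ⟶ L.obj P)) = _
      rw [hrP, L.map_id]
    have hyon : ν.app (L.obj C) ⟨φ⟩ = ⟨φ⟩ := by
      have hn : ν.app (L.obj C) (coyo.map φ ⟨𝟙 (L.obj P)⟩) =
          coyo.map φ (ν.app (L.obj P) ⟨𝟙 (L.obj P)⟩) :=
        types_congr_hom (ν.naturality φ) (⟨𝟙 (L.obj P)⟩ : coyo.obj (L.obj P))
      have hcm : coyo.map φ (⟨𝟙 (L.obj P)⟩ : coyo.obj (L.obj P)) = ⟨φ⟩ := by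
        show (⟨𝟙 (L.obj P) ≫ φ⟩ : ULift (L.obj P ⟶ L.obj C)) = ⟨φ⟩
        rw [Category.id_comp]
      rw [hcm] at hn
      rw [hn, hid, hcm]
    have hfin := (hν C ⟨φ⟩).symm.trans hyon
    have := congrArg ULift.down hfin
    exact this
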